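/- For an elementary existential doctrine P and an arrow [f] : (A,ρ) → (B,σ) in the elementary quotient completion Q_P, one has the equality ∃_{pr2}(∃_{⟨pr1, f∘pr2⟩}(ρ) ∧ P_{⟨pr2,pr3⟩}(σ)) = ∃_{pr'2}(P_{⟨pr'1,pr'2⟩}(ρ) ∧ P_{⟨f∘pr'2,pr'3⟩}(σ)) in P(A×B), where unprimed projections are from A×A×B and primed ones from A×B×B. -/

import Mathlib

open CategoryTheory CategoryTheory.Limits

universe u v w

/-- Layer 0: an indexed family of inf-semilattices over a category. -/
structure DocL0 (C : Type u) [Category.{v} C] where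
  obj : C → Type w
  semi : ∀ A : C, SemilatticeInf (obj A)

attribute [instance] DocL0.semi

/-- Layer 1: fibrewise top elements. -/
structure DocL1 (C : Type u) [Category.{v} C] extends DocL0.{u, v, w} C where
  otop : ∀ A : C, OrderTop (obj A)

attribute [instance] DocL1.otop

/-- A doctrine: an indexed inf-semilattice `P : Cᵒᵖ → InfSL`. -/
structure Doctrine (C : Type u) [Category.{v} C] extends DocL1.{u, v, w} C where
  map : ∀ {A B : C}, (A ⟶ B) → obj B → obj A
  map_id : ∀ (A : C) (x : obj A), map (𝟙 A) x = x
  map_comp : ∀ {A B D : C} (f : A ⟶ B) (g : B ⟶ D) (x : obj D),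
    map (f ≫ g) x = map f (map g x)
  map_mono : ∀ {A B : C} (f : A ⟶ B), Monotone (map f)
  map_inf : ∀ {A B : C} (f : A ⟶ B) (x y : obj B),
    map f (x ⊓ y) = map f x ⊓ map f y
  map_top : ∀ {A B : C} (f : A ⟶ B), map f (⊤ : obj B) = (⊤ : obj A)

/-- An elementary existential doctrine. -/
structure EED (C : Type u) [Category.{v} C] [HasBinaryProducts C] extends
    Doctrine.{u, v, w} C where
  delta : ∀ A : C, obj (A ⨯ A)
  elem_i : ∀ {A : C} (α : obj A) (β : obj (A ⨯ A)),
    map prod.fst α ⊓ delta A ≤ β ↔ α ≤ map (diag A) β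
  elem_ii : ∀ {X A : C} (α : obj (X ⨯ A)) (β : obj ((X ⨯ A) ⨯ A)),
    map prod.fst α ⊓ map (prod.lift (prod.fst ≫ prod.snd) prod.snd) (delta A) ≤ β ↔
      α ≤ map (prod.lift (𝟙 (X ⨯ A)) prod.snd) β
  ex : ∀ {A B : C}, (A ⟶ B) → obj A → obj B
  ex_adj : ∀ {A B : C} (f : A ⟶ B) (α : obj A) (β : obj B),
    ex f α ≤ β ↔ α ≤ map f β
  frobenius : ∀ {A B : C} (f : A ⟶ B) (α : obj B) (β : obj A),
    ex f (map f α ⊓ β) = α ⊓ ex f β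
  beck_chevalley : ∀ {A A' B : C} (f : A' ⟶ A) (β : obj (A ⨯ B)),
    ex prod.fst (map (prod.map f (𝟙 B)) β) = map f (ex prod.fst β)

namespace EED

variable {C : Type u} [Category.{v} C] [HasBinaryProducts C] (P : EED.{u, v, w} C)

/-- Relational composition `∃_{p₂}(P_{⟨p₁,p₂⟩}(θ) ∧ P_{⟨p₂,p₃⟩}(ζ))`. -/
noncomputable def comp {A B D : C} (θ : P.obj (A ⨯ B)) (ζ : P.obj (B ⨯ D)) : P.obj (A ⨯ D) :=
  P.ex (prod.lift (prod.fst ≫ prod.fst) prod.snd)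
    (P.map prod.fst θ ⊓ P.map (prod.lift (prod.fst ≫ prod.snd) prod.snd) ζ)

/-- Opposite relation `P_{⟨p₂,p₁⟩}(θ)`. -/
noncomputable def op {A B : C} (θ : P.obj (A ⨯ B)) : P.obj (B ⨯ A) :=
  P.map (prod.lift prod.snd prod.fst) θ

/-- `ρ ≤ P_{⟨p₂,p₁⟩}(ρ)`. -/
def SymmRel {A : C} (ρ : P.obj (A ⨯ A)) : Prop :=
  ρ ≤ P.map (prod.lift prod.snd prod.fst) ρ

/-- `P_{⟨p₁,p₂⟩}(ρ) ∧ P_{⟨p₂,p₃⟩}(ρ) ≤ P_{⟨p₁,p₃⟩}(ρ)` in `P((A×A)×A)`. -/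
def TransRel {A : C} (ρ : P.obj (A ⨯ A)) : Prop :=
  P.map prod.fst ρ ⊓ P.map (prod.lift (prod.fst ≫ prod.snd) prod.snd) ρ ≤
    P.map (prod.lift (prod.fst ≫ prod.fst) prod.snd) ρ

/-- `δ_A ≤ ρ`. -/
def ReflRel {A : C} (ρ : P.obj (A ⨯ A)) : Prop := P.delta A ≤ ρ

/-- A `P`-equivalence relation. -/
def EqRel {A : C} (ρ : P.obj (A ⨯ A)) : Prop :=
  P.ReflRel ρ ∧ P.SymmRel ρ ∧ P.TransRel ρ

/-- Conditions (i)–(v) for an arrow `φ : ⟨A,ρ⟩ → ⟨B,σ⟩` of the exact completion `T_P`. -/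
def IsArrow {A B : C} (ρ : P.obj (A ⨯ A)) (σ : P.obj (B ⨯ B)) (φ : P.obj (A ⨯ B)) : Prop :=
  (φ ≤ P.map (prod.lift prod.fst prod.fst) ρ ⊓ P.map (prod.lift prod.snd prod.snd) σ) ∧
  (P.map prod.fst ρ ⊓ P.map (prod.lift (prod.fst ≫ prod.snd) prod.snd) φ ≤
      P.map (prod.lift (prod.fst ≫ prod.fst) prod.snd) φ) ∧
  (P.map prod.fst φ ⊓ P.map (prod.lift (prod.fst ≫ prod.snd) prod.snd) σ ≤
      P.map (prod.lift (prod.fst ≫ prod.fst) prod.snd) φ) ∧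
  (P.map prod.fst φ ⊓ P.map (prod.lift (prod.fst ≫ prod.fst) prod.snd) φ ≤
      P.map (prod.lift (prod.fst ≫ prod.snd) prod.snd) σ) ∧
  (P.map (diag A) ρ ≤ P.ex prod.fst φ)

/-- The graph relation `L[f] = ∃_{p₂}(P_{⟨p₁,p₂⟩}(ρ) ∧ P_{⟨f∘p₂,p₃⟩}(σ))` in `P(A×B)`. -/
noncomputable def Lrel {A B : C} (f : A ⟶ B) (ρ : P.obj (A ⨯ A)) (σ : P.obj (B ⨯ B)) : P.obj (A ⨯ B) :=
  P.ex (prod.lift (prod.fst ≫ prod.fst) prod.snd)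
    (P.map prod.fst ρ ⊓ P.map (prod.lift (prod.fst ≫ prod.snd ≫ f) prod.snd) σ)

end EED

section AuxLemmas

variable {C : Type u} [Category.{v} C] [HasBinaryProducts C] (P : EED.{u, v, w} C)

lemma EED.ex_unit {X Y : C} (g : X ⟶ Y) (a : P.obj X) : a ≤ P.map g (P.ex g a) :=
  (P.ex_adj g a _).1 le_rfl

lemma EED.ex_mono {X Y : C} (g : X ⟶ Y) {a b : P.obj X} (h : a ≤ b) :
    P.ex g a ≤ P.ex g b :=
  (P.ex_adj g a _).2 (h.trans (P.ex_unit g b))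

/-- `∃` along a map precomposed with an isomorphism. -/
lemma EED.ex_comp_iso {X Y Z : C} (r : Y ⟶ X) (r' : X ⟶ Y)
    (h2 : r' ≫ r = 𝟙 X) (e : X ⟶ Z) (x : P.obj X) :
    P.ex (r ≫ e) (P.map r x) = P.ex e x := by
  apply le_antisymm
  · rw [P.ex_adj, P.map_comp]
    exact P.map_mono r (P.ex_unit e x)
  · rw [P.ex_adj]
    have u := P.ex_unit (r ≫ e) (P.map r x)
    have := P.map_mono r' u
    rwa [← P.map_comp, ← P.map_comp, ← Category.assoc, h2, P.map_id,
      Category.id_comp] at this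

/-- If `δ ≤ σ` then the pullback of `σ` along the diagonal is `⊤`. -/
lemma EED.diag_top {X : C} {σ : P.obj (X ⨯ X)} (h : P.delta X ≤ σ) :
    P.map (diag X) σ = (⊤ : P.obj X) := by
  refine le_antisymm le_top ((P.elem_i (⊤ : P.obj X) σ).1 ?_)
  rw [P.map_top, top_inf_eq]
  exact h

end AuxLemmas

/-- for an arrow `[f] : (A,ρ) → (B,σ)` of `Q_P` one has
`∃_{pr₂}(∃_{⟨pr₁,f∘pr₂⟩}(ρ) ∧ P_{⟨pr₂,pr₃⟩}(σ)) =
 ∃_{pr'₂}(P_{⟨pr'₁,pr'₂⟩}(ρ) ∧ P_{⟨f∘pr'₂,pr'₃⟩}(σ))` in `P(A×B)`. -/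
theorem Lrel_two_descriptions
    {C : Type u} [Category.{v} C] [HasBinaryProducts C] (P : EED.{u, v, w} C)
    {A B : C} (ρ : P.obj (A ⨯ A)) (σ : P.obj (B ⨯ B))
    (hρ : P.EqRel ρ) (hσ : P.EqRel σ)
    (f : A ⟶ B) (hf : ρ ≤ P.map (prod.map f f) σ) :
    P.ex (prod.lift (prod.fst ≫ prod.fst) prod.snd)
        (P.map prod.fst (P.ex (prod.lift prod.fst (prod.snd ≫ f)) ρ) ⊓
          P.map (prod.lift (prod.fst ≫ prod.snd) prod.snd) σ) =
      P.Lrel f ρ σ := by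
  obtain ⟨hρr, hρs, hρt⟩ := hρ
  obtain ⟨hσr, hσs, hσt⟩ := hσ
  unfold EED.Lrel
  set g : A ⨯ A ⟶ A ⨯ B := prod.lift prod.fst (prod.snd ≫ f) with hg
  set e₁ : (A ⨯ B) ⨯ B ⟶ A ⨯ B := prod.lift (prod.fst ≫ prod.fst) prod.snd with he₁
  set e₂ : (A ⨯ A) ⨯ B ⟶ A ⨯ B := prod.lift (prod.fst ≫ prod.fst) prod.snd with he₂
  set X : P.obj ((A ⨯ A) ⨯ B) :=
    P.map prod.fst ρ ⊓ P.map (prod.lift (prod.fst ≫ prod.snd ≫ f) prod.snd) σ with hX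
  set S : P.obj ((A ⨯ B) ⨯ B) :=
    P.map (prod.lift (prod.fst ≫ prod.snd) prod.snd) σ with hS
  -- Step A : `∃_g ρ ≤ ∃_{e₂} X`.
  have hA : P.ex g ρ ≤ P.ex e₂ X := by
    rw [P.ex_adj]
    set k : A ⨯ A ⟶ (A ⨯ A) ⨯ B := prod.lift (𝟙 _) (prod.snd ≫ f) with hk
    have hke : k ≫ e₂ = g := by
      apply Limits.prod.hom_ext <;> simp [prod.lift_fst, prod.lift_snd, prod.lift_fst_assoc, prod.lift_snd_assoc, hk, he₂, hg]
    have hkX : ρ ≤ P.map k X := by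
      have c3 : k ≫ (prod.fst : (A ⨯ A) ⨯ B ⟶ A ⨯ A) = 𝟙 _ := by simp [prod.lift_fst, prod.lift_snd, prod.lift_fst_assoc, prod.lift_snd_assoc, hk]
      have c4 : k ≫ prod.lift (prod.fst ≫ prod.snd ≫ f) prod.snd
          = (prod.snd ≫ f) ≫ diag B := by
        apply Limits.prod.hom_ext <;> simp [prod.lift_fst, prod.lift_snd, prod.lift_fst_assoc, prod.lift_snd_assoc, hk, diag]
      rw [hX, P.map_inf, ← P.map_comp, ← P.map_comp, c3, c4, P.map_id,
        P.map_comp, P.diag_top hσr, P.map_top]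
      exact le_inf le_rfl le_top
    calc ρ ≤ P.map k X := hkX
      _ ≤ P.map k (P.map e₂ (P.ex e₂ X)) := P.map_mono _ (P.ex_unit e₂ X)
      _ = P.map g (P.ex e₂ X) := by rw [← P.map_comp, hke]
  apply le_antisymm
  · -- LHS ≤ RHS
    rw [P.ex_adj]
    refine le_trans (inf_le_inf (P.map_mono _ hA) (le_refl S)) ?_
    -- now : map fst (ex e₂ X) ⊓ S ≤ map e₁ (ex e₂ X)
    set r : (A ⨯ B) ⨯ A ⟶ (A ⨯ A) ⨯ B :=
      prod.lift (prod.lift (prod.fst ≫ prod.fst) prod.snd) (prod.fst ≫ prod.snd) with hr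
    set r' : (A ⨯ A) ⨯ B ⟶ (A ⨯ B) ⨯ A :=
      prod.lift (prod.lift (prod.fst ≫ prod.fst) prod.snd) (prod.fst ≫ prod.snd) with hr'
    have hr2 : r' ≫ r = 𝟙 _ := by
      apply Limits.prod.hom_ext
      · apply Limits.prod.hom_ext <;> simp [prod.lift_fst, prod.lift_snd, prod.lift_fst_assoc, prod.lift_snd_assoc, hr, hr']
      · simp [prod.lift_fst, prod.lift_snd, prod.lift_fst_assoc, prod.lift_snd_assoc, hr, hr']
    have hre : r ≫ e₂ = (prod.fst : (A ⨯ B) ⨯ A ⟶ A ⨯ B) := by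
      apply Limits.prod.hom_ext <;> simp [prod.lift_fst, prod.lift_snd, prod.lift_fst_assoc, prod.lift_snd_assoc, hr, he₂]
    have hL : P.ex e₂ X = P.ex prod.fst (P.map r X) := by
      rw [← P.ex_comp_iso r r' hr2 e₂ X, hre]
    set w : ((A ⨯ B) ⨯ B) ⨯ A ⟶ (A ⨯ A) ⨯ B :=
      prod.map prod.fst (𝟙 A) ≫ r with hw
    have hfstL : P.map prod.fst (P.ex e₂ X) = P.ex prod.fst (P.map w X) := by
      rw [hL, ← P.beck_chevalley (prod.fst : (A ⨯ B) ⨯ B ⟶ A ⨯ B) (P.map r X),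
        ← P.map_comp, ← hw]
    rw [hfstL, inf_comm, ← P.frobenius (prod.fst : ((A ⨯ B) ⨯ B) ⨯ A ⟶ (A ⨯ B) ⨯ B) S
      (P.map w X), P.ex_adj]
    -- now : map fst S ⊓ map w X ≤ map fst (map e₁ (ex e₂ X))
    set m : ((A ⨯ B) ⨯ B) ⨯ A ⟶ (A ⨯ A) ⨯ B :=
      prod.lift (prod.lift (prod.fst ≫ prod.fst ≫ prod.fst) prod.snd)
        (prod.fst ≫ prod.snd) with hm
    have hme : m ≫ e₂ = (prod.fst : ((A ⨯ B) ⨯ B) ⨯ A ⟶ (A ⨯ B) ⨯ B) ≫ e₁ := by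
      apply Limits.prod.hom_ext <;> simp [prod.lift_fst, prod.lift_snd, prod.lift_fst_assoc, prod.lift_snd_assoc, hm, he₁, he₂]
    have hmX : P.map m X ≤ P.map prod.fst (P.map e₁ (P.ex e₂ X)) := by
      rw [← P.map_comp, ← hme, P.map_comp]
      exact P.map_mono m (P.ex_unit e₂ X)
    refine le_trans ?_ hmX
    -- expand everything as pullbacks of ρ and σ
    have cw1 : w ≫ (prod.fst : (A ⨯ A) ⨯ B ⟶ A ⨯ A)
        = prod.lift (prod.fst ≫ prod.fst ≫ prod.fst) prod.snd := by
      apply Limits.prod.hom_ext <;> simp [prod.lift_fst, prod.lift_snd, prod.lift_fst_assoc, prod.lift_snd_assoc, hw, hr]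
    have cw2 : w ≫ prod.lift (prod.fst ≫ prod.snd ≫ f) prod.snd
        = prod.lift (prod.snd ≫ f) (prod.fst ≫ prod.fst ≫ prod.snd) := by
      apply Limits.prod.hom_ext <;> simp [prod.lift_fst, prod.lift_snd, prod.lift_fst_assoc, prod.lift_snd_assoc, hw, hr]
    have cS : (prod.fst : ((A ⨯ B) ⨯ B) ⨯ A ⟶ (A ⨯ B) ⨯ B) ≫
        prod.lift (prod.fst ≫ prod.snd) prod.snd
        = prod.lift (prod.fst ≫ prod.fst ≫ prod.snd) (prod.fst ≫ prod.snd) := by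
      apply Limits.prod.hom_ext <;> simp [prod.lift_fst, prod.lift_snd, prod.lift_fst_assoc, prod.lift_snd_assoc]
    have cm1 : m ≫ (prod.fst : (A ⨯ A) ⨯ B ⟶ A ⨯ A)
        = prod.lift (prod.fst ≫ prod.fst ≫ prod.fst) prod.snd := by
      apply Limits.prod.hom_ext <;> simp [prod.lift_fst, prod.lift_snd, prod.lift_fst_assoc, prod.lift_snd_assoc, hm]
    have cm2 : m ≫ prod.lift (prod.fst ≫ prod.snd ≫ f) prod.snd
        = prod.lift (prod.snd ≫ f) (prod.fst ≫ prod.snd) := by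
      apply Limits.prod.hom_ext <;> simp [prod.lift_fst, prod.lift_snd, prod.lift_fst_assoc, prod.lift_snd_assoc, hm]
    -- transitivity of σ, pulled back
    set t : ((A ⨯ B) ⨯ B) ⨯ A ⟶ (B ⨯ B) ⨯ B :=
      prod.lift (prod.lift (prod.snd ≫ f) (prod.fst ≫ prod.fst ≫ prod.snd))
        (prod.fst ≫ prod.snd) with ht
    have ct1 : t ≫ (prod.fst : (B ⨯ B) ⨯ B ⟶ B ⨯ B)
        = prod.lift (prod.snd ≫ f) (prod.fst ≫ prod.fst ≫ prod.snd) := by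
      simp [prod.lift_fst, prod.lift_snd, prod.lift_fst_assoc, prod.lift_snd_assoc, ht]
    have ct2 : t ≫ prod.lift (prod.fst ≫ prod.snd) prod.snd
        = prod.lift (prod.fst ≫ prod.fst ≫ prod.snd) (prod.fst ≫ prod.snd) := by
      apply Limits.prod.hom_ext <;> simp [prod.lift_fst, prod.lift_snd, prod.lift_fst_assoc, prod.lift_snd_assoc, ht]
    have ct3 : t ≫ prod.lift (prod.fst ≫ prod.fst) prod.snd
        = prod.lift (prod.snd ≫ f) (prod.fst ≫ prod.snd) := by
      apply Limits.prod.hom_ext <;> simp [prod.lift_fst, prod.lift_snd, prod.lift_fst_assoc, prod.lift_snd_assoc, ht]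
    have htrans : P.map (prod.lift (prod.snd ≫ f) (prod.fst ≫ prod.fst ≫ prod.snd) :
          ((A ⨯ B) ⨯ B) ⨯ A ⟶ B ⨯ B) σ ⊓
        P.map (prod.lift (prod.fst ≫ prod.fst ≫ prod.snd) (prod.fst ≫ prod.snd) :
          ((A ⨯ B) ⨯ B) ⨯ A ⟶ B ⨯ B) σ ≤
        P.map (prod.lift (prod.snd ≫ f) (prod.fst ≫ prod.snd) :
          ((A ⨯ B) ⨯ B) ⨯ A ⟶ B ⨯ B) σ := by
      have h := P.map_mono t hσt
      rwa [P.map_inf, ← P.map_comp, ← P.map_comp, ← P.map_comp, ct1, ct2, ct3] at h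
    rw [hS, ← P.map_comp, cS, hX, P.map_inf, P.map_inf, ← P.map_comp, ← P.map_comp,
      ← P.map_comp, ← P.map_comp, cw1, cw2, cm1, cm2]
    refine le_inf (le_trans inf_le_right inf_le_left) (le_trans ?_ htrans)
    exact le_inf (le_trans inf_le_right inf_le_right) inf_le_left
  · -- RHS ≤ LHS
    rw [P.ex_adj]
    set h : (A ⨯ A) ⨯ B ⟶ (A ⨯ B) ⨯ B := prod.lift (prod.fst ≫ g) prod.snd with hh
    have hcomp : h ≫ e₁ = e₂ := by
      apply Limits.prod.hom_ext <;> simp [prod.lift_fst, prod.lift_snd, prod.lift_fst_assoc, prod.lift_snd_assoc, hh, hg, he₁, he₂]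
    have c1 : h ≫ (prod.fst : (A ⨯ B) ⨯ B ⟶ A ⨯ B) = prod.fst ≫ g := by simp [prod.lift_fst, prod.lift_snd, prod.lift_fst_assoc, prod.lift_snd_assoc, hh]
    have c2 : h ≫ prod.lift (prod.fst ≫ prod.snd) prod.snd
        = prod.lift (prod.fst ≫ prod.snd ≫ f) prod.snd := by
      apply Limits.prod.hom_ext <;> simp [prod.lift_fst, prod.lift_snd, prod.lift_fst_assoc, prod.lift_snd_assoc, hh, hg]
    have step : X ≤ P.map h (P.map prod.fst (P.ex g ρ) ⊓ S) := by
      rw [hX, hS, P.map_inf, ← P.map_comp, ← P.map_comp, c1, c2, P.map_comp]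
      exact inf_le_inf (P.map_mono _ (P.ex_unit g ρ)) le_rfl
    calc X ≤ P.map h (P.map prod.fst (P.ex g ρ) ⊓ S) := step
      _ ≤ P.map h (P.map e₁ (P.ex e₁ (P.map prod.fst (P.ex g ρ) ⊓ S))) :=
          P.map_mono _ (P.ex_unit e₁ _)
      _ = P.map e₂ (P.ex e₁ (P.map prod.fst (P.ex g ρ) ⊓ S)) := by
          rw [← P.map_comp, hcomp]
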